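/- Let $\mathcal{S} \subset \mathbb{R}^n$ be nonempty and $f \colon \mathcal{S} \to \mathbb{R}^m$ satisfy $\|f(x_1) - f(x_2)\| \leq L \|x_1 - x_2\|$ for all $x_1, x_2 \in \mathcal{S}$ and $\|f(x)\| \leq K(1 + \|x\|^{1/3})$ for all $x \in \mathcal{S}$, with constants $L, K > 0$. Then there exists $F \colon \mathbb{R}^n \to \mathbb{R}^m$ with $F|_{\mathcal{S}} = f$, $\|F(y_1) - F(y_2)\| \leq (L + 2K)\|y_1 - y_2\|$ for all $y_1, y_2 \in \mathbb{R}^n$, and $\|F(y)\| \leq 2K(1 + \|y\|^{1/3})$ for all $y \in \mathbb{R}^n$. -/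

import Mathlib

open Finset RealInnerProductSpace in
lemma dsum {V : Type*} [NormedAddCommGroup V] [InnerProductSpace ℝ V]
    {ι : Type*} (t : Finset ι) (w : ι → ℝ) (a : ι → V) (hw1 : ∑ i ∈ t, w i = 1) :
    ∑ i ∈ t, ∑ j ∈ t, w i * w j * ‖a i - a j‖ ^ 2
      = 2 * ∑ i ∈ t, w i * ‖a i‖ ^ 2 - 2 * ‖∑ i ∈ t, w i • a i‖ ^ 2 := by
  have h1 : ‖∑ i ∈ t, w i • a i‖ ^ 2
      = ∑ i ∈ t, ∑ j ∈ t, w i * w j * ⟪a i, a j⟫ := by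
    rw [← real_inner_self_eq_norm_sq, sum_inner]
    refine Finset.sum_congr rfl fun i _ => ?_
    rw [inner_sum]
    refine Finset.sum_congr rfl fun j _ => ?_
    rw [real_inner_smul_left, real_inner_smul_right]; ring
  have e1 : ∑ i ∈ t, ∑ j ∈ t, w i * w j * ‖a i‖ ^ 2 = ∑ i ∈ t, w i * ‖a i‖ ^ 2 := by
    refine Finset.sum_congr rfl fun i _ => ?_
    have : ∑ j ∈ t, w i * w j * ‖a i‖ ^ 2 = (w i * ‖a i‖ ^ 2) * ∑ j ∈ t, w j := by
      rw [Finset.mul_sum]; exact Finset.sum_congr rfl fun j _ => by ring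
    rw [this, hw1, mul_one]
  have e2 : ∑ i ∈ t, ∑ j ∈ t, w i * w j * ‖a j‖ ^ 2 = ∑ i ∈ t, w i * ‖a i‖ ^ 2 := by
    rw [Finset.sum_comm]
    refine Finset.sum_congr rfl fun j _ => ?_
    have : ∑ i ∈ t, w i * w j * ‖a j‖ ^ 2 = (w j * ‖a j‖ ^ 2) * ∑ i ∈ t, w i := by
      rw [Finset.mul_sum]; exact Finset.sum_congr rfl fun i _ => by ring
    rw [this, hw1, mul_one]
  calc ∑ i ∈ t, ∑ j ∈ t, w i * w j * ‖a i - a j‖ ^ 2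
      = ∑ i ∈ t, ((∑ j ∈ t, w i * w j * ‖a i‖ ^ 2) + (∑ j ∈ t, w i * w j * ‖a j‖ ^ 2)
          - 2 * ∑ j ∈ t, w i * w j * ⟪a i, a j⟫) := by
        refine Finset.sum_congr rfl fun i _ => ?_
        rw [Finset.mul_sum, ← Finset.sum_add_distrib, ← Finset.sum_sub_distrib]
        refine Finset.sum_congr rfl fun j _ => ?_
        rw [@norm_sub_sq_real]; ring
    _ = 2 * ∑ i ∈ t, w i * ‖a i‖ ^ 2 - 2 * ‖∑ i ∈ t, w i • a i‖ ^ 2 := by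
        rw [h1, Finset.sum_sub_distrib, Finset.sum_add_distrib, e1, e2, ← Finset.mul_sum]
        ring

set_option maxHeartbeats 1000000 in
open Finset RealInnerProductSpace in
lemma finite_helly {E V : Type*} [NormedAddCommGroup E] [InnerProductSpace ℝ E]
    [NormedAddCommGroup V] [InnerProductSpace ℝ V] [FiniteDimensional ℝ V]
    {ι : Type*} (s : Finset ι) (hs : s.Nonempty) (x : ι → E) (u : ι → V) {L : ℝ} (hL : 0 < L)
    (hlip : ∀ i ∈ s, ∀ j ∈ s, ‖u i - u j‖ ≤ L * ‖x i - x j‖) (y : E) :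
    ∃ z : V, ∀ i ∈ s, ‖z - u i‖ ≤ L * ‖y - x i‖ := by
  classical
  by_cases hy : ∃ i ∈ s, x i = y
  · obtain ⟨i₀, hi₀, hxi₀⟩ := hy
    refine ⟨u i₀, fun i hi => ?_⟩
    have := hlip i₀ hi₀ i hi
    rwa [hxi₀] at this
  push_neg at hy
  obtain ⟨i₀, hi₀⟩ := id hs
  set ρ : ι → ℝ := fun i => L * ‖y - x i‖ with hρdef
  have hρ : ∀ i ∈ s, 0 < ρ i := fun i hi =>
    mul_pos hL (norm_pos_iff.2 (sub_ne_zero.2 fun h => hy i hi h.symm))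
  set φ : V → ℝ := fun z => s.sup' hs (fun i => ‖z - u i‖ / ρ i) with hφdef
  have hφcont : Continuous φ := by
    apply Continuous.finset_sup'_apply hs
    intro i _
    exact ((continuous_id.sub continuous_const).norm).div_const _
  have hφle : ∀ z, ∀ i ∈ s, ‖z - u i‖ / ρ i ≤ φ z := fun z i hi => Finset.le_sup' (fun i => ‖z - u i‖ / ρ i) hi
  set c := φ (u i₀) with hcdef
  have hc0 : 0 ≤ c :=
    le_trans (div_nonneg (norm_nonneg _) (hρ i₀ hi₀).le) (hφle (u i₀) i₀ hi₀)
  have hrad : 0 ≤ c * ρ i₀ := mul_nonneg hc0 (hρ i₀ hi₀).le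
  obtain ⟨z, hzmem, hzmin⟩ := (isCompact_closedBall (u i₀) (c * ρ i₀)).exists_isMinOn
    ⟨u i₀, Metric.mem_closedBall_self hrad⟩ hφcont.continuousOn
  have hzmin' : ∀ w' ∈ Metric.closedBall (u i₀) (c * ρ i₀), φ z ≤ φ w' := fun w' hw' => hzmin hw'
  have hglobal : ∀ w', φ z ≤ φ w' := by
    intro w'
    by_cases hw : w' ∈ Metric.closedBall (u i₀) (c * ρ i₀)
    · exact hzmin' w' hw
    · have h1 : c * ρ i₀ < ‖w' - u i₀‖ := by
        simpa [Metric.mem_closedBall, dist_eq_norm] using hw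
      have h2 : c < ‖w' - u i₀‖ / ρ i₀ := (lt_div_iff₀ (hρ i₀ hi₀)).2 (by linarith)
      have h3 : φ z ≤ c := hzmin' (u i₀) (Metric.mem_closedBall_self hrad)
      exact h3.trans (h2.le.trans (hφle w' i₀ hi₀))
  set lam := φ z with hlamdef
  by_cases hlam : lam ≤ 1
  · refine ⟨z, fun i hi => ?_⟩
    have h1 : ‖z - u i‖ / ρ i ≤ 1 := (hφle z i hi).trans hlam
    have := (div_le_one (hρ i hi)).1 h1
    simpa [hρdef] using this
  push_neg at hlam
  exfalso
  have hlam0 : 0 < lam := lt_trans one_pos hlam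
  set T := s.filter (fun i => ‖z - u i‖ = lam * ρ i) with hTdef
  have hTsub : ∀ i ∈ T, i ∈ s := fun i hi => (Finset.mem_filter.1 hi).1
  obtain ⟨iT, hiT, hiTe⟩ := Finset.exists_mem_eq_sup' hs (fun i => ‖z - u i‖ / ρ i)
  have hiTT : iT ∈ T := by
    refine Finset.mem_filter.2 ⟨hiT, ?_⟩
    have h2 : lam = ‖z - u iT‖ / ρ iT := hiTe
    rw [h2, div_mul_cancel₀ _ (hρ iT hiT).ne']
  set hull := convexHull ℝ (u '' (T : Set ι)) with hulldef
  have hullne : hull.Nonempty := ⟨u iT, subset_convexHull _ _ ⟨iT, by exact_mod_cast hiTT, rfl⟩⟩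
  have hullconv : Convex ℝ hull := convex_convexHull _ _
  have hullcompact : IsCompact hull := (T.finite_toSet.image u).isCompact_convexHull ℝ
  have htouch : ∀ i ∈ s, ‖z - u i‖ ≤ lam * ρ i := by
    intro i hi
    have := hφle z i hi
    rw [div_le_iff₀ (hρ i hi)] at this
    linarith [this]
  -- z belongs to the convex hull of the touching points
  have hzhull : z ∈ hull := by
    by_contra hzh
    obtain ⟨p, hp, hpmin⟩ :=
      exists_norm_eq_iInf_of_complete_convex hullne hullcompact.isComplete hullconv z
    have hchar := (norm_eq_iInf_iff_real_inner_le_zero hullconv hp).1 hpmin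
    set v := p - z with hvdef
    have hvne : v ≠ 0 := sub_ne_zero.2 fun h => hzh (h ▸ hp)
    have hvnorm : 0 < ‖v‖ := norm_pos_iff.2 hvne
    have hkey : ∀ q ∈ hull, ‖v‖ ^ 2 ≤ ⟪v, q - z⟫ := by
      intro q hq
      have h1 : ⟪z - p, q - p⟫ ≤ 0 := hchar q hq
      have h2 : ⟪z - p, q - p⟫ = -⟪v, q - p⟫ := by
        rw [hvdef, ← inner_neg_left]; congr 1; abel
      have h3 : q - z = (q - p) + v := by rw [hvdef]; abel
      rw [h3, inner_add_right, real_inner_self_eq_norm_sq]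
      linarith [h2 ▸ h1]
    set t₀ : ℝ := min 1 (s.inf' ⟨i₀, hi₀⟩ fun i =>
      if ‖z - u i‖ < lam * ρ i then (lam * ρ i - ‖z - u i‖) / (2 * ‖v‖) else 1) with ht₀def
    have ht₀pos : 0 < t₀ := by
      refine lt_min one_pos ((Finset.lt_inf'_iff _).2 fun i hi => ?_)
      split_ifs with h
      · exact div_pos (by linarith) (by positivity)
      · exact one_pos
    have ht₀le1 : t₀ ≤ 1 := min_le_left _ _
    have hlt : ∀ i ∈ s, ‖z + t₀ • v - u i‖ / ρ i < lam := by
      intro i hi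
      rw [div_lt_iff₀ (hρ i hi)]
      by_cases hiT2 : ‖z - u i‖ = lam * ρ i
      · have hq : u i ∈ hull := subset_convexHull _ _ ⟨i, by
          exact_mod_cast Finset.mem_filter.2 ⟨hi, hiT2⟩, rfl⟩
        have hk := hkey (u i) hq
        have hre : z + t₀ • v - u i = (z - u i) + t₀ • v := by abel
        have hexp : ‖z + t₀ • v - u i‖ ^ 2
            = ‖z - u i‖ ^ 2 + 2 * (t₀ * ⟪z - u i, v⟫) + t₀ ^ 2 * ‖v‖ ^ 2 := by
          rw [hre, @norm_add_sq_real, real_inner_smul_right, norm_smul, Real.norm_eq_abs,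
            mul_pow, sq_abs]
        have hinner : ⟪z - u i, v⟫ = -⟪v, u i - z⟫ := by
          rw [real_inner_comm, ← inner_neg_right, neg_sub]
        have hsq : ‖z + t₀ • v - u i‖ ^ 2 < (lam * ρ i) ^ 2 := by
          rw [hexp, hiT2, hinner]
          have e1 := mul_le_mul_of_nonneg_left hk ht₀pos.le
          have e2 : t₀ ^ 2 * ‖v‖ ^ 2 ≤ t₀ * ‖v‖ ^ 2 := by nlinarith [mul_nonneg (mul_nonneg (sub_nonneg.2 ht₀le1) ht₀pos.le) (sq_nonneg ‖v‖)]
          nlinarith [e1, e2, mul_pos ht₀pos (pow_pos hvnorm 2)]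
        have h2 : 0 < lam * ρ i := mul_pos hlam0 (hρ i hi)
        nlinarith [norm_nonneg (z + t₀ • v - u i), hsq, h2]
      · have hlt2 : ‖z - u i‖ < lam * ρ i := lt_of_le_of_ne (htouch i hi) hiT2
        have htle : t₀ ≤ (lam * ρ i - ‖z - u i‖) / (2 * ‖v‖) := by
          refine le_trans (min_le_right _ _) ?_
          have := Finset.inf'_le (b := i)
            (fun i => if ‖z - u i‖ < lam * ρ i then (lam * ρ i - ‖z - u i‖) / (2 * ‖v‖) else 1) hi
          rwa [if_pos hlt2] at this
        have h4 : t₀ * ‖v‖ ≤ (lam * ρ i - ‖z - u i‖) / 2 := by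
          rw [le_div_iff₀ (by positivity : (0:ℝ) < 2 * ‖v‖)] at htle
          nlinarith [htle, hvnorm]
        have h5 : ‖z + t₀ • v - u i‖ ≤ ‖z - u i‖ + t₀ * ‖v‖ := by
          have hre : z + t₀ • v - u i = (z - u i) + t₀ • v := by abel
          rw [hre]
          refine (norm_add_le _ _).trans ?_
          rw [norm_smul, Real.norm_eq_abs, abs_of_pos ht₀pos]
        linarith [h4, h5, hlt2]
    have hcontra : φ (z + t₀ • v) < lam := (Finset.sup'_lt_iff hs).2 hlt
    exact absurd (hglobal (z + t₀ • v)) (not_le.2 hcontra)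
  -- final computation: contradiction with lam > 1
  rw [hulldef, _root_.convexHull_eq] at hzhull
  obtain ⟨ι', t', w, zf, hw0, hw1, hzf, hcm⟩ := hzhull
  have hJ : ∀ i ∈ t', ∃ j, j ∈ T ∧ u j = zf i := by
    intro i hi
    obtain ⟨j, hj, hju⟩ := hzf i hi
    exact ⟨j, by exact_mod_cast hj, hju⟩
  set J : ι' → ι := fun i => if h : ∃ j, j ∈ T ∧ u j = zf i then h.choose else i₀ with hJdef
  have hJT : ∀ i ∈ t', J i ∈ T ∧ u (J i) = zf i := by
    intro i hi
    simp only [hJdef, dif_pos (hJ i hi)]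
    exact (hJ i hi).choose_spec
  rw [Finset.centerMass_eq_of_sum_1 _ _ hw1] at hcm
  set a : ι' → V := fun i => zf i - z with hadef
  set b : ι' → E := fun i => x (J i) - y with hbdef
  have hsum_a : ∑ i ∈ t', w i • a i = 0 := by
    simp only [hadef, smul_sub, Finset.sum_sub_distrib, ← Finset.sum_smul, hw1, hcm, one_smul,
      sub_self]
  have hA := dsum t' w a hw1
  rw [hsum_a, norm_zero] at hA
  have hB := dsum t' w b hw1
  have hab : ∀ i ∈ t', ∀ j ∈ t', ‖a i - a j‖ ≤ L * ‖b i - b j‖ := by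
    intro i hi j hj
    have h1 : a i - a j = u (J i) - u (J j) := by
      rw [hadef]; simp only [(hJT i hi).2, (hJT j hj).2]; abel
    have h2 : b i - b j = x (J i) - x (J j) := by rw [hbdef]; exact sub_sub_sub_cancel_right _ _ _
    rw [h1, h2]
    exact hlip _ (hTsub _ (hJT i hi).1) _ (hTsub _ (hJT j hj).1)
  have hanorm : ∀ i ∈ t', ‖a i‖ ^ 2 = lam ^ 2 * L ^ 2 * ‖b i‖ ^ 2 := by
    intro i hi
    have h1 : ‖a i‖ = lam * ρ (J i) := by
      rw [hadef]
      simp only [← (hJT i hi).2]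
      rw [← norm_neg]
      simp only [neg_sub]
      exact (Finset.mem_filter.1 (hJT i hi).1).2
    have h2 : ‖b i‖ = ‖y - x (J i)‖ := by rw [hbdef, ← norm_neg]; congr 1; exact neg_sub _ _
    rw [h1, h2, hρdef]
    ring
  have hstep1 : ∑ i ∈ t', ∑ j ∈ t', w i * w j * ‖a i - a j‖ ^ 2
      ≤ L ^ 2 * ∑ i ∈ t', ∑ j ∈ t', w i * w j * ‖b i - b j‖ ^ 2 := by
    rw [Finset.mul_sum]
    refine Finset.sum_le_sum fun i hi => ?_
    rw [Finset.mul_sum]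
    refine Finset.sum_le_sum fun j hj => ?_
    have h1 := hab i hi j hj
    have h2 : 0 ≤ w i * w j := mul_nonneg (hw0 i hi) (hw0 j hj)
    have h3 : ‖a i - a j‖ ^ 2 ≤ (L * ‖b i - b j‖) ^ 2 := pow_le_pow_left₀ (norm_nonneg _) h1 2
    calc w i * w j * ‖a i - a j‖ ^ 2 ≤ w i * w j * (L * ‖b i - b j‖) ^ 2 :=
          mul_le_mul_of_nonneg_left h3 h2
      _ = L ^ 2 * (w i * w j * ‖b i - b j‖ ^ 2) := by ring
  set D := ∑ i ∈ t', w i * ‖b i‖ ^ 2 with hDdef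
  have hsuma2 : ∑ i ∈ t', w i * ‖a i‖ ^ 2 = lam ^ 2 * L ^ 2 * D := by
    rw [hDdef, Finset.mul_sum]
    refine Finset.sum_congr rfl fun i hi => ?_
    rw [hanorm i hi]; ring
  have hDpos : 0 < D := by
    obtain ⟨i, hi, hwi⟩ : ∃ i ∈ t', 0 < w i := by
      by_contra h
      push_neg at h
      have : ∑ i ∈ t', w i = 0 :=
        Finset.sum_eq_zero fun i hi => le_antisymm (h i hi) (hw0 i hi)
      rw [hw1] at this; norm_num at this
    have hbipos : 0 < ‖b i‖ := by
      rw [hbdef]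
      exact norm_pos_iff.2 (sub_ne_zero.2 (hy _ (hTsub _ (hJT i hi).1)))
    have h1 : 0 < w i * ‖b i‖ ^ 2 := by positivity
    exact lt_of_lt_of_le h1 (Finset.single_le_sum
      (f := fun j => w j * ‖b j‖ ^ 2) (fun j hj => mul_nonneg (hw0 j hj) (sq_nonneg _)) hi)
  have e1 : ∑ i ∈ t', ∑ j ∈ t', w i * w j * ‖a i - a j‖ ^ 2 = 2 * (lam ^ 2 * L ^ 2 * D) := by
    rw [hA, hsuma2]; ring
  have e2 : L ^ 2 * ∑ i ∈ t', ∑ j ∈ t', w i * w j * ‖b i - b j‖ ^ 2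
      = 2 * (L ^ 2 * D) - 2 * (L ^ 2 * ‖∑ i ∈ t', w i • b i‖ ^ 2) := by
    rw [hB]; ring
  have e3 : (0:ℝ) ≤ L ^ 2 * ‖∑ i ∈ t', w i • b i‖ ^ 2 := by positivity
  have e4 : 2 * (lam ^ 2 * L ^ 2 * D) ≤ 2 * (L ^ 2 * D) := by linarith [hstep1, e1, e2, e3]
  have h5 : 1 < lam ^ 2 := by nlinarith [hlam]
  nlinarith [e4, h5, mul_pos (pow_pos hL 2) hDpos]
lemma one_point {E V : Type*} [NormedAddCommGroup E] [InnerProductSpace ℝ E]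
    [NormedAddCommGroup V] [InnerProductSpace ℝ V] [FiniteDimensional ℝ V]
    (T : Set E) (hT : T.Nonempty) (g : E → V) {L : ℝ} (hL : 0 < L)
    (hg : ∀ a ∈ T, ∀ b ∈ T, ‖g a - g b‖ ≤ L * ‖a - b‖) (y : E) :
    ∃ z : V, ∀ a ∈ T, ‖z - g a‖ ≤ L * ‖y - a‖ := by
  classical
  obtain ⟨x₀, hx₀⟩ := hT
  have key := (isCompact_closedBall (g x₀) (L * ‖y - x₀‖)).inter_iInter_nonempty
    (fun i : T => Metric.closedBall (g i) (L * ‖y - (i : E)‖))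
    (fun i => Metric.isClosed_closedBall)
    (fun u => by
      obtain ⟨z, hz⟩ := finite_helly (insert (⟨x₀, hx₀⟩ : T) u) (Finset.insert_nonempty _ _)
        (fun i : T => (i : E)) (fun i : T => g i) hL
        (fun i _ j _ => hg i i.2 j j.2) y
      refine ⟨z, ?_, ?_⟩
      · rw [Metric.mem_closedBall, dist_eq_norm]
        exact hz _ (Finset.mem_insert_self _ _)
      · rw [Set.mem_iInter₂]
        intro i hi
        rw [Metric.mem_closedBall, dist_eq_norm]
        exact hz i (Finset.mem_insert_of_mem hi))
  obtain ⟨z, _, hz2⟩ := key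
  refine ⟨z, fun a ha => ?_⟩
  have := Set.mem_iInter.1 hz2 ⟨a, ha⟩
  rwa [Metric.mem_closedBall, dist_eq_norm] at this

lemma kirszbraun {E V : Type*} [NormedAddCommGroup E] [InnerProductSpace ℝ E]
    [NormedAddCommGroup V] [InnerProductSpace ℝ V] [FiniteDimensional ℝ V]
    (S : Set E) (hS : S.Nonempty) (f : E → V) {L : ℝ} (hL : 0 < L)
    (hlip : ∀ x₁ ∈ S, ∀ x₂ ∈ S, ‖f x₁ - f x₂‖ ≤ L * ‖x₁ - x₂‖) :
    ∃ g : E → V, (∀ a b, ‖g a - g b‖ ≤ L * ‖a - b‖) ∧ ∀ x ∈ S, g x = f x := by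
  classical
  let P : Set E × (E → V) → Prop := fun p =>
    S ⊆ p.1 ∧ (∀ a ∈ p.1, ∀ b ∈ p.1, ‖p.2 a - p.2 b‖ ≤ L * ‖a - b‖) ∧ ∀ x ∈ S, p.2 x = f x
  let α := {p : Set E × (E → V) // P p}
  let r : α → α → Prop := fun p q => p.1.1 ⊆ q.1.1 ∧ Set.EqOn p.1.2 q.1.2 p.1.1
  have hbase : P (S, f) := ⟨subset_rfl, hlip, fun x _ => rfl⟩
  have htrans : ∀ {a b c : α}, r a b → r b c → r a c := by
    rintro a b c ⟨h1, h2⟩ ⟨h3, h4⟩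
    exact ⟨h1.trans h3, fun x hx => (h2 hx).trans (h4 (h1 hx))⟩
  obtain ⟨M, hM⟩ := exists_maximal_of_chains_bounded (r := r) (fun c hc => by
    rcases Set.eq_empty_or_nonempty c with rfl | ⟨p₀, hp₀⟩
    · exact ⟨⟨(S, f), hbase⟩, fun a ha => absurd ha (Set.notMem_empty a)⟩
    · set U : Set E := ⋃ p ∈ c, (p : α).1.1 with hU
      set gf : E → V := fun a =>
        if h : ∃ p : α, p ∈ c ∧ a ∈ p.1.1 then h.choose.1.2 a else f a with hgf
      have hcons : ∀ p : α, p ∈ c → ∀ a ∈ p.1.1, gf a = p.1.2 a := by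
        intro p hp a ha
        have hex : ∃ q : α, q ∈ c ∧ a ∈ q.1.1 := ⟨p, hp, ha⟩
        simp only [hgf, dif_pos hex]
        obtain ⟨hqc, hqa⟩ := hex.choose_spec
        rcases eq_or_ne hex.choose p with h | h
        · rw [h]
        · rcases hc hqc hp h with h2 | h2
          · exact h2.2 hqa
          · exact (h2.2 ha).symm
      have hUP : P (U, gf) := by
        refine ⟨(p₀.2.1).trans
          (Set.subset_biUnion_of_mem (u := fun p : α => p.1.1) hp₀), ?_, ?_⟩
        · intro a ha b hb
          show ‖gf a - gf b‖ ≤ L * ‖a - b‖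
          obtain ⟨p, hp, hap⟩ := Set.mem_iUnion₂.1 ha
          obtain ⟨q, hq, hbq⟩ := Set.mem_iUnion₂.1 hb
          rcases eq_or_ne p q with h | h
          · subst h
            rw [hcons p hp a hap, hcons p hp b hbq]
            exact p.2.2.1 a hap b hbq
          · rcases hc hp hq h with h2 | h2
            · rw [hcons q hq a (h2.1 hap), hcons q hq b hbq]
              exact q.2.2.1 a (h2.1 hap) b hbq
            · rw [hcons p hp a hap, hcons p hp b (h2.1 hbq)]
              exact p.2.2.1 a hap b (h2.1 hbq)
        · intro x hx
          show gf x = f x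
          rw [hcons p₀ hp₀ x (p₀.2.1 hx)]
          exact p₀.2.2.2 x hx
      refine ⟨⟨(U, gf), hUP⟩, fun p hp =>
        ⟨Set.subset_biUnion_of_mem (u := fun p : α => p.1.1) hp, ?_⟩⟩
      exact fun a ha => (hcons p hp a ha).symm)
    htrans
  -- maximal element has full domain
  have hfull : ∀ y, y ∈ M.1.1 := by
    intro y
    by_contra hy
    obtain ⟨z, hz⟩ := one_point M.1.1 ⟨hS.choose, M.2.1 hS.choose_spec⟩ M.1.2 hL M.2.2.1 y
    set g' : E → V := Function.update M.1.2 y z with hg'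
    have hP' : P (insert y M.1.1, g') := by
      refine ⟨M.2.1.trans (Set.subset_insert _ _), ?_, ?_⟩
      · intro a ha b hb
        show ‖g' a - g' b‖ ≤ L * ‖a - b‖
        by_cases hay : a = y <;> by_cases hby : b = y
        · rw [hay, hby]
          simp [mul_nonneg hL.le (norm_nonneg _)]
        · have hb' : b ∈ M.1.1 := (Set.mem_insert_iff.1 hb).resolve_left hby
          rw [hay, hg', Function.update_self, Function.update_of_ne hby]
          exact hz b hb'
        · have ha' : a ∈ M.1.1 := (Set.mem_insert_iff.1 ha).resolve_left hay
          rw [hby, hg', Function.update_self, Function.update_of_ne hay, ← norm_neg, neg_sub,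
            ← norm_neg (a - y), neg_sub]
          exact hz a ha'
        · have ha' : a ∈ M.1.1 := (Set.mem_insert_iff.1 ha).resolve_left hay
          have hb' : b ∈ M.1.1 := (Set.mem_insert_iff.1 hb).resolve_left hby
          rw [hg', Function.update_of_ne hay, Function.update_of_ne hby]
          exact M.2.2.1 a ha' b hb'
      · intro x hx
        show g' x = f x
        have h1 : x ≠ y := fun h => hy (h ▸ M.2.1 hx)
        rw [hg', Function.update_of_ne h1]
        exact M.2.2.2 x hx
    have hrM : r M ⟨(insert y M.1.1, g'), hP'⟩ := by
      refine ⟨Set.subset_insert _ _, fun a ha => ?_⟩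
      have h1 : a ≠ y := fun h => hy (h ▸ ha)
      exact (Function.update_of_ne h1 z M.1.2).symm
    have := (hM _ hrM).1
    exact hy (this (Set.mem_insert y _))
  exact ⟨M.1.2, fun a b => M.2.2.1 a (hfull a) b (hfull b), M.2.2.2⟩
open RealInnerProductSpace

noncomputable def trunc {V : Type*} [NormedAddCommGroup V] [InnerProductSpace ℝ V]
    (r : ℝ) (v : V) : V := if ‖v‖ ≤ r then v else (r / ‖v‖) • v

variable {V : Type*} [NormedAddCommGroup V] [InnerProductSpace ℝ V]

lemma trunc_eq {r : ℝ} {v : V} (h : ‖v‖ ≤ r) : trunc r v = v := if_pos h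

lemma trunc_norm_le {r : ℝ} (hr : 0 ≤ r) (v : V) : ‖trunc r v‖ ≤ r := by
  rw [trunc]
  split_ifs with h
  · exact h
  · push_neg at h
    have hv : 0 < ‖v‖ := lt_of_le_of_lt hr h
    rw [norm_smul, Real.norm_eq_abs, abs_of_nonneg (div_nonneg hr hv.le),
      div_mul_cancel₀ _ hv.ne']

private lemma sq_le_sq_norm {a b : ℝ} (hb : 0 ≤ b) (h : a ^ 2 ≤ b ^ 2) (ha : 0 ≤ a) : a ≤ b := by
  nlinarith

-- asymmetric helper for Lipschitz in v
private lemma trunc_aux {r : ℝ} (hr : 0 ≤ r) {u v : V} (hu : ‖u‖ ≤ r) (hv : r < ‖v‖) :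
    ‖u - (r / ‖v‖) • v‖ ≤ ‖u - v‖ := by
  have hy : 0 < ‖v‖ := lt_of_le_of_lt hr hv
  set b : ℝ := r / ‖v‖ with hbdef
  have hb0 : 0 ≤ b := div_nonneg hr hy.le
  have hb1 : b ≤ 1 := (div_le_one hy).2 hv.le
  have hby : b * ‖v‖ = r := div_mul_cancel₀ _ hy.ne'
  have hI : ⟪u, v⟫ ≤ ‖u‖ * ‖v‖ := real_inner_le_norm u v
  have e1 : ‖u - b • v‖ ^ 2 = ‖u‖ ^ 2 - 2 * (b * ⟪u, v⟫) + b ^ 2 * ‖v‖ ^ 2 := by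
    rw [@norm_sub_sq_real, real_inner_smul_right, norm_smul, Real.norm_eq_abs, mul_pow, sq_abs]
  have e2 : ‖u - v‖ ^ 2 = ‖u‖ ^ 2 - 2 * ⟪u, v⟫ + ‖v‖ ^ 2 := by
    rw [@norm_sub_sq_real]
  have key : ‖u - b • v‖ ^ 2 ≤ ‖u - v‖ ^ 2 := by
    rw [e1, e2]
    have h1 : 0 ≤ (1 - b) * (b * ‖v‖ ^ 2 - ⟪u, v⟫) := by
      refine mul_nonneg (by linarith) ?_
      have : ⟪u, v⟫ ≤ r * ‖v‖ := hI.trans (mul_le_mul_of_nonneg_right hu hy.le)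
      nlinarith [this, hby]
    nlinarith [h1, sq_nonneg (‖v‖ - b * ‖v‖), hby]
  exact sq_le_sq_norm (norm_nonneg _) key (norm_nonneg _)

private lemma trunc_aux2 {r : ℝ} (hr : 0 ≤ r) {u v : V} (hu : r < ‖u‖) (hv : r < ‖v‖) :
    ‖(r / ‖u‖) • u - (r / ‖v‖) • v‖ ≤ ‖u - v‖ := by
  have hx : 0 < ‖u‖ := lt_of_le_of_lt hr hu
  have hy : 0 < ‖v‖ := lt_of_le_of_lt hr hv
  set a : ℝ := r / ‖u‖
  set b : ℝ := r / ‖v‖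
  have hax : a * ‖u‖ = r := div_mul_cancel₀ _ hx.ne'
  have hby : b * ‖v‖ = r := div_mul_cancel₀ _ hy.ne'
  have ha0 : 0 ≤ a := div_nonneg hr hx.le
  have hb0 : 0 ≤ b := div_nonneg hr hy.le
  have hI : ⟪u, v⟫ ≤ ‖u‖ * ‖v‖ := real_inner_le_norm u v
  have hab : a * b * (‖u‖ * ‖v‖) = r ^ 2 := by
    have : (a * ‖u‖) * (b * ‖v‖) = r * r := by rw [hax, hby]
    nlinarith [this]
  have hab1 : a * b ≤ 1 := by
    have h2 : r ^ 2 ≤ ‖u‖ * ‖v‖ := by nlinarith [hu, hv, hr]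
    have h3 : 0 < ‖u‖ * ‖v‖ := mul_pos hx hy
    nlinarith [hab, h2, h3]
  have e1 : ‖a • u - b • v‖ ^ 2
      = a ^ 2 * ‖u‖ ^ 2 - 2 * (a * b * ⟪u, v⟫) + b ^ 2 * ‖v‖ ^ 2 := by
    rw [@norm_sub_sq_real, real_inner_smul_left, real_inner_smul_right, norm_smul, norm_smul,
      Real.norm_eq_abs, Real.norm_eq_abs, mul_pow, mul_pow, sq_abs, sq_abs]
    ring
  have e2 : ‖u - v‖ ^ 2 = ‖u‖ ^ 2 - 2 * ⟪u, v⟫ + ‖v‖ ^ 2 := by rw [@norm_sub_sq_real]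
  have key : ‖a • u - b • v‖ ^ 2 ≤ ‖u - v‖ ^ 2 := by
    rw [e1, e2]
    have h1 : 0 ≤ (1 - a * b) * (‖u‖ * ‖v‖ - ⟪u, v⟫) :=
      mul_nonneg (by linarith) (by linarith)
    nlinarith [h1, sq_nonneg (‖u‖ - ‖v‖), hab, hax, hby]
  exact sq_le_sq_norm (norm_nonneg _) key (norm_nonneg _)

lemma trunc_lip_v {r : ℝ} (hr : 0 ≤ r) (u v : V) :
    ‖trunc r u - trunc r v‖ ≤ ‖u - v‖ := by
  rw [trunc, trunc]
  split_ifs with h1 h2 h2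
  · exact le_refl _
  · push_neg at h2
    exact trunc_aux hr h1 h2
  · push_neg at h1
    rw [← norm_neg, neg_sub, ← norm_neg (u - v), neg_sub]
    exact trunc_aux hr h2 h1
  · push_neg at h1 h2
    exact trunc_aux2 hr h1 h2

private lemma trunc_lip_r_aux {r₁ r₂ : ℝ} (h1 : 0 ≤ r₁) (h12 : r₁ ≤ r₂) (v : V) :
    ‖trunc r₁ v - trunc r₂ v‖ ≤ r₂ - r₁ := by
  rw [trunc, trunc]
  split_ifs with ha hb hb
  · simpa [sub_nonneg] using h12
  · exact absurd (ha.trans h12) hb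
  · push_neg at ha
    have hv : 0 < ‖v‖ := lt_of_le_of_lt h1 ha
    have : (r₁ / ‖v‖) • v - v = (r₁ / ‖v‖ - 1) • v := by rw [sub_smul, one_smul]
    rw [this, norm_smul, Real.norm_eq_abs, abs_of_nonpos (by
      rw [sub_nonpos, div_le_one hv]; exact ha.le)]
    have : -(r₁ / ‖v‖ - 1) * ‖v‖ = ‖v‖ - r₁ := by field_simp; ring
    rw [this]
    linarith [hb]
  · push_neg at ha hb
    have hv : 0 < ‖v‖ := lt_of_le_of_lt h1 ha
    have : (r₁ / ‖v‖) • v - (r₂ / ‖v‖) • v = ((r₁ - r₂) / ‖v‖) • v := by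
      rw [← sub_smul, div_sub_div_same]
    rw [this, norm_smul, Real.norm_eq_abs, abs_div, abs_of_nonneg (norm_nonneg v),
      div_mul_cancel₀ _ hv.ne', abs_of_nonpos (by linarith)]
    linarith

lemma trunc_lip_r {r₁ r₂ : ℝ} (h1 : 0 ≤ r₁) (h2 : 0 ≤ r₂) (v : V) :
    ‖trunc r₁ v - trunc r₂ v‖ ≤ |r₁ - r₂| := by
  rcases le_total r₁ r₂ with h | h
  · rw [abs_of_nonpos (by linarith)]
    have := trunc_lip_r_aux h1 h v
    linarith [this]
  · rw [abs_of_nonneg (by linarith), ← norm_neg, neg_sub]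
    have := trunc_lip_r_aux h2 h v
    linarith [this]
noncomputable def mf (t : ℝ) : ℝ := min t (t ^ ((1:ℝ)/3))

lemma mf_nonneg {t : ℝ} (ht : 0 ≤ t) : 0 ≤ mf t :=
  le_min ht (Real.rpow_nonneg ht _)

lemma mf_le_rpow (t : ℝ) : mf t ≤ t ^ ((1:ℝ)/3) := min_le_right _ _

lemma rpow_le_self {t : ℝ} (ht : 1 ≤ t) : t ^ ((1:ℝ)/3) ≤ t := by
  nth_rewrite 2 [← Real.rpow_one t]
  exact Real.rpow_le_rpow_of_exponent_le ht (by norm_num)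

lemma self_le_rpow {t : ℝ} (ht0 : 0 ≤ t) (ht : t ≤ 1) : t ≤ t ^ ((1:ℝ)/3) := by
  rcases eq_or_lt_of_le ht0 with h | h
  · rw [← h, Real.zero_rpow (by norm_num)]
  · nth_rewrite 1 [← Real.rpow_one t]
    exact Real.rpow_le_rpow_of_exponent_ge h ht (by norm_num)

lemma mf_lip_aux {s t : ℝ} (hs : 0 ≤ s) (hst : s ≤ t) : mf t - mf s ≤ t - s := by
  have ht : 0 ≤ t := hs.trans hst
  rcases le_total t 1 with ht1 | ht1
  · rw [mf, mf, min_eq_left (self_le_rpow hs (hst.trans ht1)), min_eq_left (self_le_rpow ht ht1)]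
  rcases le_total 1 s with hs1 | hs1
  · rw [mf, mf, min_eq_right (rpow_le_self hs1), min_eq_right (rpow_le_self (hs1.trans hst))]
    set A := s ^ ((1:ℝ)/3) with hA
    set B := t ^ ((1:ℝ)/3) with hB
    have hA1 : 1 ≤ A := by
      have := Real.rpow_le_rpow zero_le_one hs1 (by norm_num : (0:ℝ) ≤ 1/3)
      rwa [Real.one_rpow] at this
    have hAB : A ≤ B := Real.rpow_le_rpow hs hst (by norm_num)
    have hA3 : A ^ (3:ℕ) = s := by
      rw [hA, ← Real.rpow_natCast (s ^ ((1:ℝ)/3)) 3, ← Real.rpow_mul hs]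
      norm_num
    have hB3 : B ^ (3:ℕ) = t := by
      rw [hB, ← Real.rpow_natCast (t ^ ((1:ℝ)/3)) 3, ← Real.rpow_mul ht]
      norm_num
    have hf : 0 ≤ (B - A) * (A^2 + A*B + B^2 - 1) :=
      mul_nonneg (sub_nonneg.2 hAB) (by nlinarith [hA1, hAB])
    nlinarith [hf, hA3, hB3]
  · rw [mf, mf, min_eq_left (self_le_rpow hs hs1), min_eq_right (rpow_le_self ht1)]
    have := rpow_le_self ht1
    linarith

lemma mf_mono {s t : ℝ} (hs : 0 ≤ s) (h : s ≤ t) : mf s ≤ mf t :=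
  le_min ((min_le_left _ _).trans h)
    ((min_le_right _ _).trans (Real.rpow_le_rpow hs h (by norm_num)))

lemma mf_lip {s t : ℝ} (hs : 0 ≤ s) (ht : 0 ≤ t) : |mf s - mf t| ≤ |s - t| := by
  rcases le_total s t with h | h
  · rw [abs_of_nonpos (sub_nonpos.2 (mf_mono hs h)), abs_of_nonpos (by linarith)]
    linarith [mf_lip_aux hs h]
  · rw [abs_of_nonneg (sub_nonneg.2 (mf_mono ht h)), abs_of_nonneg (by linarith)]
    linarith [mf_lip_aux ht h]

/-- Lipschitz extension with sub-linear growth: a map `f` on a nonempty `S ⊆ ℝⁿ` that is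
`L`-Lipschitz and satisfies `‖f(x)‖ ≤ K(1 + ‖x‖^{1/3})` extends to `F : ℝⁿ → ℝᵐ` which is
`(L + 2K)`-Lipschitz and satisfies `‖F(y)‖ ≤ 2K(1 + ‖y‖^{1/3})`. -/
theorem stmt_4 (n m : ℕ) (S : Set (EuclideanSpace ℝ (Fin n))) (hS : S.Nonempty)
    (f : EuclideanSpace ℝ (Fin n) → EuclideanSpace ℝ (Fin m)) (L K : ℝ)
    (hL : 0 < L) (hK : 0 < K)
    (hlip : ∀ x₁ ∈ S, ∀ x₂ ∈ S, ‖f x₁ - f x₂‖ ≤ L * ‖x₁ - x₂‖)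
    (hgrow : ∀ x ∈ S, ‖f x‖ ≤ K * (1 + ‖x‖ ^ ((1:ℝ)/3))) :
    ∃ F : EuclideanSpace ℝ (Fin n) → EuclideanSpace ℝ (Fin m),
      (∀ x ∈ S, F x = f x) ∧
      (∀ y₁ y₂, ‖F y₁ - F y₂‖ ≤ (L + 2*K) * ‖y₁ - y₂‖) ∧
      (∀ y, ‖F y‖ ≤ 2*K*(1 + ‖y‖ ^ ((1:ℝ)/3))) := by
  obtain ⟨G, hGlip, hGeq⟩ := kirszbraun S hS f hL hlip
  set rr : EuclideanSpace ℝ (Fin n) → ℝ := fun y => 2 * K * (1 + mf ‖y‖) with hrrdef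
  have hrr0 : ∀ y, 0 ≤ rr y := fun y => by
    have := mf_nonneg (norm_nonneg y)
    positivity
  refine ⟨fun y => trunc (rr y) (G y), ?_, ?_, ?_⟩
  · intro x hx
    show trunc (rr x) (G x) = f x
    rw [hGeq x hx]
    refine trunc_eq ?_
    refine (hgrow x hx).trans ?_
    show K * (1 + ‖x‖ ^ ((1:ℝ)/3)) ≤ 2 * K * (1 + mf ‖x‖)
    set u := ‖x‖ with hu
    have hu0 : 0 ≤ u := norm_nonneg x
    rcases le_total u 1 with h1 | h1
    · have h2 : u ^ ((1:ℝ)/3) ≤ 1 := Real.rpow_le_one hu0 h1 (by norm_num)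
      have h3 : mf u = u := min_eq_left (self_le_rpow hu0 h1)
      rw [h3]
      nlinarith [hK, hu0, h2]
    · have h3 : mf u = u ^ ((1:ℝ)/3) := min_eq_right (rpow_le_self h1)
      rw [h3]
      nlinarith [hK, Real.rpow_nonneg hu0 ((1:ℝ)/3)]
  · intro y₁ y₂
    have htri : ‖trunc (rr y₁) (G y₁) - trunc (rr y₂) (G y₂)‖
        ≤ ‖trunc (rr y₁) (G y₁) - trunc (rr y₁) (G y₂)‖
          + ‖trunc (rr y₁) (G y₂) - trunc (rr y₂) (G y₂)‖ := by
      have : trunc (rr y₁) (G y₁) - trunc (rr y₂) (G y₂)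
          = (trunc (rr y₁) (G y₁) - trunc (rr y₁) (G y₂))
            + (trunc (rr y₁) (G y₂) - trunc (rr y₂) (G y₂)) := by abel
      rw [this]
      exact norm_add_le _ _
    have h1 : ‖trunc (rr y₁) (G y₁) - trunc (rr y₁) (G y₂)‖ ≤ L * ‖y₁ - y₂‖ :=
      (trunc_lip_v (hrr0 y₁) _ _).trans (hGlip y₁ y₂)
    have h2 : ‖trunc (rr y₁) (G y₂) - trunc (rr y₂) (G y₂)‖ ≤ 2 * K * ‖y₁ - y₂‖ := by
      refine (trunc_lip_r (hrr0 y₁) (hrr0 y₂) _).trans ?_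
      have e1 : rr y₁ - rr y₂ = 2 * K * (mf ‖y₁‖ - mf ‖y₂‖) := by rw [hrrdef]; ring
      rw [e1, abs_mul, abs_of_pos (by positivity : (0:ℝ) < 2 * K)]
      refine mul_le_mul_of_nonneg_left ?_ (by positivity)
      refine (mf_lip (norm_nonneg y₁) (norm_nonneg y₂)).trans ?_
      exact abs_norm_sub_norm_le y₁ y₂
    calc ‖trunc (rr y₁) (G y₁) - trunc (rr y₂) (G y₂)‖
        ≤ L * ‖y₁ - y₂‖ + 2 * K * ‖y₁ - y₂‖ := htri.trans (add_le_add h1 h2)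
      _ = (L + 2*K) * ‖y₁ - y₂‖ := by ring
  · intro y
    refine (trunc_norm_le (hrr0 y) _).trans ?_
    show 2 * K * (1 + mf ‖y‖) ≤ 2 * K * (1 + ‖y‖ ^ ((1:ℝ)/3))
    have := mf_le_rpow ‖y‖
    nlinarith [hK]
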